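/- Let $\Omega$ be a commutative semigroup, $(L, \{\cdot,\cdot\}_{\alpha,\beta}, p_\alpha, q_\alpha)_{\alpha,\beta\in\Omega}$ a BiHom-$\Omega$-Lie algebra with $p_\alpha, q_\alpha$ bijective, and $(R_\alpha)_{\alpha\in\Omega}$ a Rota-Baxter family of weight $\lambda$ on $L$ commuting with $p_\alpha$ and $q_\alpha$. Define $\langle x,y\rangle_{\alpha,\beta} := \lambda\{x,y\}_{\alpha,\beta}$ and $x\blacktriangleright_{\alpha,\beta}y := \{R_\alpha(x), y\}_{\alpha,\beta}$. Then $(L, \langle\cdot,\cdot\rangle_{\alpha,\beta}, \blacktriangleright_{\alpha,\beta}, p_\alpha, q_\alpha)_{\alpha,\beta\in\Omega}$ is a BiHom-$\Omega$-PostLie algebra. -/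
import Mathlib


/-- A Rota-Baxter family of weight λ on a BiHom-Ω-Lie algebra with bijective structure
maps induces a BiHom-Ω-PostLie algebra. -/
theorem stmt_18
    {K : Type*} [Field K] {Ω : Type*} [CommSemigroup Ω]
    {L : Type*} [AddCommGroup L] [Module K L]
    (br : Ω → Ω → L →ₗ[K] L →ₗ[K] L)
    (p q : Ω → L →ₗ[K] L)
    (lam : K)
    -- (L, br, p, q) is a BiHom-Ω-Lie algebra
    (hp : ∀ (α β : Ω) (x y : L), p (α * β) (br α β x y) = br α β (p α x) (p β y))
    (hq : ∀ (α β : Ω) (x y : L), q (α * β) (br α β x y) = br α β (q α x) (q β y))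
    (hpq : ∀ (α : Ω) (x : L), p α (q α x) = q α (p α x))
    (hskew : ∀ (α β : Ω) (x y : L), br α β (q α x) (p β y) = - br β α (q β y) (p α x))
    (hjac : ∀ (α β γ : Ω) (x y z : L),
      br α (β * γ) (q α (q α x)) (br β γ (q β y) (p γ z))
        + br β (γ * α) (q β (q β y)) (br γ α (q γ z) (p α x))
        + br γ (α * β) (q γ (q γ z)) (br α β (q α x) (p β y)) = 0)
    -- p, q are bijective
    (hpbij : ∀ (α : Ω), Function.Bijective (p α))
    (hqbij : ∀ (α : Ω), Function.Bijective (q α))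
    -- (R_α) is a Rota-Baxter family of weight λ, commuting with p and q
    (R : Ω → L →ₗ[K] L)
    (hRB : ∀ (α β : Ω) (x y : L),
      br α β (R α x) (R β y)
        = R (α * β) (br α β (R α x) y + br α β x (R β y) + lam • br α β x y))
    (hRp : ∀ (α : Ω) (x : L), R α (p α x) = p α (R α x))
    (hRq : ∀ (α : Ω) (x : L), R α (q α x) = q α (R α x))
    -- the new operations
    (nbr ob : Ω → Ω → L → L → L)
    (hnbr : ∀ (α β : Ω) (x y : L), nbr α β x y = lam • br α β x y)
    (hob : ∀ (α β : Ω) (x y : L), ob α β x y = br α β (R α x) y) :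
    -- (L, nbr, ob, p, q) is a BiHom-Ω-PostLie algebra:
    -- (L, nbr, p, q) is a BiHom-Ω-Lie algebra
    (∀ (α β : Ω) (x y : L), p (α * β) (nbr α β x y) = nbr α β (p α x) (p β y)) ∧
    (∀ (α β : Ω) (x y : L), q (α * β) (nbr α β x y) = nbr α β (q α x) (q β y)) ∧
    (∀ (α β : Ω) (x y : L), nbr α β (q α x) (p β y) = - nbr β α (q β y) (p α x)) ∧
    (∀ (α β γ : Ω) (x y z : L),
      nbr α (β * γ) (q α (q α x)) (nbr β γ (q β y) (p γ z))
        + nbr β (γ * α) (q β (q β y)) (nbr γ α (q γ z) (p α x))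
        + nbr γ (α * β) (q γ (q γ z)) (nbr α β (q α x) (p β y)) = 0) ∧
    -- multiplicativity for ob
    (∀ (α β : Ω) (x y : L), p (α * β) (ob α β x y) = ob α β (p α x) (p β y)) ∧
    (∀ (α β : Ω) (x y : L), q (α * β) (ob α β x y) = ob α β (q α x) (q β y)) ∧
    -- BiHom-Ω-PostLie compatibility axioms
    (∀ (α β γ : Ω) (x y z : L),
      ob (α * β) γ (nbr α β (q α x) (p β y)) (q γ z)
        = ob α (β * γ) (p α (q α x)) (ob β γ (p β y) z)
          - ob (α * β) γ (ob α β (q α x) (p β y)) (q γ z)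
          - ob β (α * γ) (p β (q β y)) (ob α γ (p α x) z)
          + ob (β * α) γ (ob β α (q β y) (p α x)) (q γ z)) ∧
    (∀ (α β γ : Ω) (x y z : L),
      ob α (β * γ) (p α (q α x)) (nbr β γ y z)
        = nbr (α * β) γ (ob α β (q α x) y) (q γ z)
          + nbr β (α * γ) (q β y) (ob α γ (p α x) z)) := by
  -- Key Leibniz-type consequence of the BiHom Jacobi identity
  have hstar : ∀ (α β γ : Ω) (u y z : L),
      br α (β * γ) (p α (q α u)) (br β γ y z)
        = br (α * β) γ (br α β (q α u) y) (q γ z)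
          + br β (α * γ) (q β y) (br α γ (p α u) z) := by
    intro α β γ u y z
    obtain ⟨a, ha⟩ := (hqbij α).surjective (p α u)
    obtain ⟨b, hb⟩ := (hqbij β).surjective y
    obtain ⟨c, hc⟩ := (hpbij γ).surjective z
    have h := hjac α β γ a b c
    rw [hskew γ α c a, ha, hb, hc] at h
    rw [← hp α β u b] at h
    rw [hskew γ (α * β) (q γ c) (br α β u b), hq α β u b, hb, hpq γ c, hc] at h
    rw [← hpq α u] at h
    rw [mul_comm γ α] at h
    simp only [map_neg] at h
    rw [← sub_eq_zero, ← h]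
    abel
  refine ⟨?_, ?_, ?_, ?_, ?_, ?_, ?_, ?_⟩
  · intro α β x y
    simp [hnbr, map_smul, hp]
  · intro α β x y
    simp [hnbr, map_smul, hq]
  · intro α β x y
    rw [hnbr, hnbr, hskew, smul_neg]
  · intro α β γ x y z
    simp only [hnbr, map_smul, smul_smul]
    rw [← smul_add, ← smul_add, hjac α β γ x y z, smul_zero]
  · intro α β x y
    simp [hob, hp, hRp]
  · intro α β x y
    simp [hob, hq, hRq]
  · intro α β γ x y z
    simp only [hob, hnbr]
    have hA := hstar α β γ (R α x) (R β (p β y)) z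
    rw [← hRq α x, hRB α β (q α x) (p β y)] at hA
    rw [← hRp α (q α x)] at hA
    rw [← hRp α x] at hA
    rw [← hRq β (p β y), ← hpq β y] at hA
    simp only [map_add, map_smul, LinearMap.add_apply, LinearMap.smul_apply] at hA
    have hD : br β α (R β (q β y)) (p α x) = - br α β (q α x) (R β (p β y)) := by
      rw [hRq β y, hRp β y, hskew α β x (R β y), neg_neg]
    rw [mul_comm β α, hD]
    simp only [map_neg, map_smul, LinearMap.neg_apply, LinearMap.smul_apply]
    rw [hA]
    abel
  · intro α β γ x y z
    simp only [hob, hnbr, map_smul]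
    rw [hRp α (q α x), hRq α x, hstar α β γ (R α x) y z, ← hRq α x, ← hRp α x,
      smul_add]
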